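/- arXiv:0711.2503 — 2 statements merged into one kernel-verified Lean document; each statement's English description precedes it below -/
import Mathlib

section
/- For all natural numbers m ≥ 1 and 0 ≤ s ≤ m, the associated Stirling number of the first kind satisfies d₂(m+1, s) ≤ (2m)^{m−s}. -/
open MeasureTheory Complex Matrix

noncomputable section

/-- The time-frequency shift `π(λ) = M_ℓ T_k` applied to a window `g ∈ ℂ^n`:
`(π(k,ℓ)g)_q = e^{2πiℓq/n} g_{(k+q) mod n}`. -/
def tfShift (n : ℕ) (lam : Fin n × Fin n) (g : Fin n → ℂ) : Fin n → ℂ :=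
  fun q => Complex.exp (2 * Real.pi * Complex.I * (lam.2 : ℕ) * (q : ℕ) / n) * g (lam.1 + q)

/-- The time-frequency shift `π(λ) = M_ℓ T_k` as an `n × n` matrix. -/
def tfMatrix (n : ℕ) (lam : Fin n × Fin n) : Matrix (Fin n) (Fin n) ℂ :=
  Matrix.of fun q p =>
    if p = lam.1 + q then Complex.exp (2 * Real.pi * Complex.I * (lam.2 : ℕ) * (q : ℕ) / n) else 0

/-- The Gabor synthesis matrix `Ψ_g ∈ ℂ^{n × n²}`, columns `π(λ)g`. -/
def gaborMatrix (n : ℕ) (g : Fin n → ℂ) : Matrix (Fin n) (Fin n × Fin n) ℂ :=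
  Matrix.of fun q lam => tfShift n lam g q

/-- The column submatrix of a matrix, columns restricted to a finite index set `Λ`. -/
def colSub {ι κ : Type*} (A : Matrix ι κ ℂ) (Λ : Finset κ) : Matrix ι ↥Λ ℂ :=
  Matrix.of fun i j => A i (j : κ)

/-- The column submatrix `Ψ_Λ` of the Gabor synthesis matrix. -/
def gaborSub (n : ℕ) (g : Fin n → ℂ) (Λ : Finset (Fin n × Fin n)) : Matrix (Fin n) ↥Λ ℂ :=
  colSub (gaborMatrix n g) Λ

/-- The ℓ¹ norm of a vector in `ℂ^ι`. -/
def l1norm {ι : Type*} [Fintype ι] (z : ι → ℂ) : ℝ := ∑ i, ‖z i‖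

/-- The ℓ² (Euclidean) norm of a vector in `ℂ^ι`. -/
def l2norm {ι : Type*} [Fintype ι] (z : ι → ℂ) : ℝ := Real.sqrt (∑ i, ‖z i‖ ^ 2)

/-- The standard Hermitian inner product `⟨u,v⟩ = ∑ u_i conj(v_i)` on `ℂ^ι`. -/
def dotc {ι : Type*} [Fintype ι] (u v : ι → ℂ) : ℂ := ∑ i, u i * (starRingEnd ℂ) (v i)

/-- `x` is the unique minimizer of the ℓ¹ norm among all `z` with `A z = A x`
(Basis Pursuit recovers `x` from `y = A x`). -/
def BPrecovers {ι κ : Type*} [Fintype ι] [Fintype κ] (A : Matrix ι κ ℂ) (x : κ → ℂ) : Prop :=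
  ∀ z : κ → ℂ, A.mulVec z = A.mulVec x → z ≠ x → l1norm x < l1norm z

/-- The spectral norm (`ℓ² → ℓ²` operator norm) of a complex matrix. -/
def specNorm {ι κ : Type*} [Fintype ι] [Fintype κ] [DecidableEq κ] (A : Matrix ι κ ℂ) : ℝ :=
  ‖LinearMap.toContinuousLinearMap (Matrix.toEuclideanLin A)‖

/-- The Frobenius norm of a complex matrix. -/
def frobNorm {ι κ : Type*} [Fintype ι] [Fintype κ] (A : Matrix ι κ ℂ) : ℝ :=
  Real.sqrt (∑ i, ∑ j, ‖A i j‖ ^ 2)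

/-- The complex sign: `sgn(z) = z/|z|` for `z ≠ 0`, and `sgn(0) = 0`. -/
def csgn (z : ℂ) : ℂ := if z = 0 then 0 else z / (‖z‖ : ℂ)

/-- The associated Stirling number of the first kind `d₂(m,s)`: the number of permutations
of an `m`-element set consisting of exactly `s` disjoint cycles, each of length at least 2
(equivalently, fixed-point-free permutations of `Fin m` with exactly `s` cycles). -/
def d2 (m s : ℕ) : ℕ :=
  Fintype.card {σ : Equiv.Perm (Fin m) // σ.cycleType.card = s ∧ σ.cycleType.sum = m}

instance : MeasurableSpace Circle := borel Circle
instance : BorelSpace Circle := ⟨rfl⟩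

/-- The normalized Haar (uniform) probability measure on the circle group
`{z ∈ ℂ : |z| = 1}`. -/
def circleHaar : Measure Circle :=
  Measure.haarMeasure (⊤ : TopologicalSpace.PositiveCompacts Circle)

instance : IsProbabilityMeasure circleHaar :=
  ⟨by unfold circleHaar; simpa using Measure.haarMeasure_self (K₀ := (⊤ : TopologicalSpace.PositiveCompacts Circle))⟩

/-- The random unimodular window `g^R_q = ε_q/√n` determined by the phases `ε : Fin n → Circle`. -/
def windowR (n : ℕ) (ε : Fin n → Circle) : Fin n → ℂ :=
  fun q => (ε q : ℂ) / Real.sqrt n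

/-- The distribution of `n` independent Haar-uniform points on the circle
(the law of the random phases `ε_0, …, ε_{n-1}`). -/
def Pmeas (n : ℕ) : Measure (Fin n → Circle) := Measure.pi fun _ => circleHaar

/-- The extension-by-zero matrix `E_Λ : ℂ^Λ → ℂ^κ`. -/
def extMat {κ : Type*} [DecidableEq κ] (Λ : Finset κ) : Matrix κ ↥Λ ℂ :=
  Matrix.of fun j lam => if j = (lam : κ) then 1 else 0

/-- Pad a matrix with columns indexed by `Λ` to one with columns indexed by all of `κ`,
filling with zero columns: the matrix `K R_Λ` where `R_Λ` is the restriction operator. -/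
def padCols {ι κ : Type*} [DecidableEq κ] {Λ : Finset κ} (K : Matrix ι ↥Λ ℂ) : Matrix ι κ ℂ :=
  Matrix.of fun i j => if h : j ∈ Λ then K i ⟨j, h⟩ else 0

end

section D2Aux
open Equiv Equiv.Perm

variable {α : Type*} [Fintype α] [DecidableEq α]

lemma d2aux_two_mul_le {σ : Equiv.Perm α} {s k : ℕ}
    (h1 : Multiset.card σ.cycleType = s) (h2 : σ.cycleType.sum = k) : 2 * s ≤ k := by
  have h := Multiset.card_nsmul_le_sum (s := σ.cycleType)
      (fun x hx => Equiv.Perm.two_le_of_mem_cycleType hx)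
  rw [h1, h2, smul_eq_mul] at h
  omega

lemma d2aux_derangement {σ : Equiv.Perm α} (h2 : σ.cycleType.sum = Fintype.card α) :
    ∀ x, σ x ≠ x := by
  intro x
  have hs : σ.support = Finset.univ :=
    σ.support.eq_univ_of_card (by rw [← Equiv.Perm.sum_cycleType]; exact h2)
  exact Equiv.Perm.mem_support.mp (hs ▸ Finset.mem_univ x)

lemma d2aux_card_fix (p : α → Prop) [DecidablePred p] (P : Multiset ℕ → Prop)
    [DecidablePred P] :
    Fintype.card {σ : Equiv.Perm α // P σ.cycleType ∧ ∀ x, ¬ p x → σ x = x}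
      = Fintype.card {τ : Equiv.Perm (Subtype p) // P τ.cycleType} := by
  refine (Fintype.card_congr ?_).symm
  refine Equiv.trans (Equiv.subtypeEquiv (Equiv.Perm.subtypeEquivSubtypePerm p)
    (fun τ => ?_)) (Equiv.trans (Equiv.subtypeSubtypeEquivSubtypeInter _ _)
    (Equiv.subtypeEquivRight (fun σ => and_comm)))
  rw [show ((Equiv.Perm.subtypeEquivSubtypePerm p) τ : Equiv.Perm α)
        = Equiv.Perm.ofSubtype τ from rfl, Equiv.Perm.cycleType_ofSubtype]

lemma d2aux_le_derangements (s n : ℕ) (hn : Fintype.card α = n) :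
    Fintype.card {σ : Equiv.Perm α // Multiset.card σ.cycleType = s ∧ σ.cycleType.sum = n}
      ≤ numDerangements n := by
  subst hn
  rw [← card_derangements_eq_numDerangements]
  exact Fintype.card_le_of_injective (fun σ => ⟨σ.1, d2aux_derangement σ.2.2⟩)
    (fun σ1 σ2 h => Subtype.ext (by simpa [Subtype.ext_iff] using h))

lemma d2aux_split (σ : Equiv.Perm α) (hder : ∀ x, σ x ≠ x) (a : α) :
    IsCycle (σ.cycleOf a) ∧
    σ = (σ * (σ.cycleOf a)⁻¹) * (σ.cycleOf a) ∧
    σ.cycleType = (σ * (σ.cycleOf a)⁻¹).cycleType + (σ.cycleOf a).cycleType ∧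
    (∀ x ∈ (σ.cycleOf a).support, (σ * (σ.cycleOf a)⁻¹) x = x) ∧
    a ∈ (σ.cycleOf a).support ∧ σ a ∈ (σ.cycleOf a).support ∧ (σ.cycleOf a) a = σ a := by
  have hca : (σ.cycleOf a) a = σ a := Equiv.Perm.cycleOf_apply_self σ a
  have hd : Equiv.Perm.Disjoint (σ * (σ.cycleOf a)⁻¹) (σ.cycleOf a) :=
    Equiv.Perm.disjoint_mul_inv_of_mem_cycleFactorsFinset
      (Equiv.Perm.cycleOf_mem_cycleFactorsFinset_iff.mpr (Equiv.Perm.mem_support.mpr (hder a)))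
  have hfact : σ = (σ * (σ.cycleOf a)⁻¹) * (σ.cycleOf a) := by simp
  have ha : a ∈ (σ.cycleOf a).support :=
    Equiv.Perm.mem_support.mpr (by rw [hca]; exact hder a)
  refine ⟨Equiv.Perm.isCycle_cycleOf σ (hder a), hfact, ?_, ?_, ha, ?_, hca⟩
  · conv_lhs => rw [hfact]
    exact Equiv.Perm.Disjoint.cycleType_mul hd
  · exact fun x hx => (hd x).resolve_right (Equiv.Perm.mem_support.mp hx)
  · rw [← hca]; exact Equiv.Perm.apply_mem_support.mpr ha

lemma d2aux_case1_mem (σ : Equiv.Perm α) (hder : ∀ x, σ x ≠ x) (a : α)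
    (h : σ (σ a) = a) {s n : ℕ}
    (h1 : Multiset.card σ.cycleType = s) (h2 : σ.cycleType.sum = n) :
    (Multiset.card (σ * (σ.cycleOf a)⁻¹).cycleType = s - 1 ∧
      (σ * (σ.cycleOf a)⁻¹).cycleType.sum = n - 2) ∧
    ∀ x, ¬ (x ≠ a ∧ x ≠ σ a) → (σ * (σ.cycleOf a)⁻¹) x = x := by
  obtain ⟨hc, hfact, hct, hfix, ha, ha', hca⟩ := d2aux_split σ hder a
  have hsw : σ.cycleOf a = Equiv.swap a (σ a) := by
    have := hc.eq_swap_of_apply_apply_eq_self (x := a) (by rw [hca]; exact hder a)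
      (by rw [hca, Equiv.Perm.cycleOf_apply_apply_self]; exact h)
    rwa [hca] at this
  have hsc : (σ.cycleOf a).support.card = 2 := by
    rw [hsw]; exact Equiv.Perm.card_support_swap (Ne.symm (hder a))
  have hcard : Multiset.card σ.cycleType = Multiset.card (σ * (σ.cycleOf a)⁻¹).cycleType + 1 := by
    rw [hct, Multiset.card_add, hc.cycleType]; simp
  have hsum : σ.cycleType.sum = (σ * (σ.cycleOf a)⁻¹).cycleType.sum + 2 := by
    rw [hct, Multiset.sum_add, hc.cycleType, hsc]; simp
  refine ⟨⟨by omega, by omega⟩, ?_⟩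
  intro x hx
  by_cases hxa : x = a
  · subst hxa; exact hfix x ha
  by_cases hxa' : x = σ a
  · subst hxa'; exact hfix _ ha'
  exact absurd ⟨hxa, hxa'⟩ hx

lemma d2aux_case2_mem (σ : Equiv.Perm α) (hder : ∀ x, σ x ≠ x) (a : α)
    (h : σ (σ a) ≠ a) {s n : ℕ}
    (h1 : Multiset.card σ.cycleType = s) (h2 : σ.cycleType.sum = n) :
    (Multiset.card ((σ * (σ.cycleOf a)⁻¹) * (Equiv.swap a (σ a) * σ.cycleOf a)).cycleType = s ∧
      ((σ * (σ.cycleOf a)⁻¹) * (Equiv.swap a (σ a) * σ.cycleOf a)).cycleType.sum = n - 1) ∧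
    ∀ x, ¬ x ≠ a → ((σ * (σ.cycleOf a)⁻¹) * (Equiv.swap a (σ a) * σ.cycleOf a)) x = x := by
  obtain ⟨hc, hfact, hct, hfix, ha, ha', hca⟩ := d2aux_split σ hder a
  have hcc : (σ.cycleOf a) ((σ.cycleOf a) a) ≠ a := by
    rw [hca, Equiv.Perm.cycleOf_apply_apply_self]; exact h
  have hc2 : IsCycle (Equiv.swap a (σ a) * σ.cycleOf a) := by
    have := hc.swap_mul (x := a) (by rw [hca]; exact hder a) hcc
    rwa [hca] at this
  have hsupp2 : (Equiv.swap a (σ a) * σ.cycleOf a).support = (σ.cycleOf a).support \ {a} := by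
    have := Equiv.Perm.support_swap_mul_eq (σ.cycleOf a) a hcc
    rwa [hca] at this
  have hd2 : Equiv.Perm.Disjoint (σ * (σ.cycleOf a)⁻¹) (Equiv.swap a (σ a) * σ.cycleOf a) := by
    intro x
    by_cases hx : x ∈ (σ.cycleOf a).support
    · exact Or.inl (hfix x hx)
    · refine Or.inr (Equiv.Perm.notMem_support.mp ?_)
      rw [hsupp2]
      simp [hx]
  have hl2 : 2 ≤ (σ.cycleOf a).support.card := hc.two_le_card_support
  have hcard2 : (Equiv.swap a (σ a) * σ.cycleOf a).support.card
      = (σ.cycleOf a).support.card - 1 := by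
    rw [hsupp2, Finset.card_sdiff_of_subset (Finset.singleton_subset_iff.mpr ha)]; simp
  have hct2 : ((σ * (σ.cycleOf a)⁻¹) * (Equiv.swap a (σ a) * σ.cycleOf a)).cycleType
      = (σ * (σ.cycleOf a)⁻¹).cycleType + (Equiv.swap a (σ a) * σ.cycleOf a).cycleType :=
    Equiv.Perm.Disjoint.cycleType_mul hd2
  have hcard : Multiset.card σ.cycleType = Multiset.card (σ * (σ.cycleOf a)⁻¹).cycleType + 1 := by
    rw [hct, Multiset.card_add, hc.cycleType]; simp
  have hsum : σ.cycleType.sum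
      = (σ * (σ.cycleOf a)⁻¹).cycleType.sum + (σ.cycleOf a).support.card := by
    rw [hct, Multiset.sum_add, hc.cycleType]; simp
  have ha2 : (Equiv.swap a (σ a) * σ.cycleOf a) a = a := by
    refine Equiv.Perm.notMem_support.mp ?_
    rw [hsupp2]; simp
  constructor
  · constructor
    · rw [hct2, Multiset.card_add, hc2.cycleType]; simp; omega
    · rw [hct2, Multiset.sum_add, hc2.cycleType, hcard2]; simp; omega
  · intro x hx
    rw [not_not] at hx
    rw [hx, Equiv.Perm.mul_apply, ha2, hfix a ha]

lemma d2aux_comm (σ : Equiv.Perm α) (hder : ∀ x, σ x ≠ x) (a : α) :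
    Equiv.swap a (σ a) * (σ * (σ.cycleOf a)⁻¹)
      = (σ * (σ.cycleOf a)⁻¹) * Equiv.swap a (σ a) := by
  obtain ⟨hc, hfact, hct, hfix, ha, ha', hca⟩ := d2aux_split σ hder a
  have hdsw : Equiv.Perm.Disjoint (σ * (σ.cycleOf a)⁻¹) (Equiv.swap a (σ a)) := by
    intro x
    by_cases h1 : x = a
    · subst h1; exact Or.inl (hfix x ha)
    by_cases h2 : x = σ a
    · subst h2; exact Or.inl (hfix _ ha')
    · exact Or.inr (Equiv.swap_apply_of_ne_of_ne h1 h2)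
  exact hdsw.commute.symm

lemma d2aux_recover1 (σ : Equiv.Perm α) (hder : ∀ x, σ x ≠ x) (a : α)
    (h : σ (σ a) = a) :
    Equiv.swap a (σ a) * (σ * (σ.cycleOf a)⁻¹) = σ := by
  obtain ⟨hc, hfact, hct, hfix, ha, ha', hca⟩ := d2aux_split σ hder a
  have hsw : σ.cycleOf a = Equiv.swap a (σ a) := by
    have := hc.eq_swap_of_apply_apply_eq_self (x := a) (by rw [hca]; exact hder a)
      (by rw [hca, Equiv.Perm.cycleOf_apply_apply_self]; exact h)
    rwa [hca] at this
  rw [d2aux_comm σ hder a, ← hsw]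
  exact hfact.symm

lemma d2aux_recover2 (σ : Equiv.Perm α) (hder : ∀ x, σ x ≠ x) (a : α)
    (h : σ (σ a) ≠ a) :
    Equiv.swap a (σ a) * ((σ * (σ.cycleOf a)⁻¹) * (Equiv.swap a (σ a) * σ.cycleOf a)) = σ := by
  obtain ⟨hc, hfact, hct, hfix, ha, ha', hca⟩ := d2aux_split σ hder a
  rw [← mul_assoc, d2aux_comm σ hder a, mul_assoc, ← mul_assoc (Equiv.swap a (σ a)),
    Equiv.swap_mul_self, one_mul]
  exact hfact.symm

lemma d2aux_step {β : Type} [Fintype β] [DecidableEq β] (n s : ℕ)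
    (hβ : Fintype.card β = n) (a : β) :
    Fintype.card {σ : Equiv.Perm β // Multiset.card σ.cycleType = s ∧ σ.cycleType.sum = n}
      ≤ Fintype.card (Σ a' : {x : β // x ≠ a},
          ({σ' : Equiv.Perm β // (Multiset.card σ'.cycleType = s ∧ σ'.cycleType.sum = n - 1) ∧
              ∀ x, ¬ x ≠ a → σ' x = x}
           ⊕ {σ' : Equiv.Perm β // (Multiset.card σ'.cycleType = s - 1 ∧
                σ'.cycleType.sum = n - 2) ∧ ∀ x, ¬ (x ≠ a ∧ x ≠ a'.1) → σ' x = x})) := by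
  have hder : ∀ σ : {σ : Equiv.Perm β //
      Multiset.card σ.cycleType = s ∧ σ.cycleType.sum = n}, ∀ x, σ.1 x ≠ x :=
    fun σ => d2aux_derangement (by rw [hβ]; exact σ.2.2)
  refine Fintype.card_le_of_injective (fun σ =>
    ⟨⟨σ.1 a, hder σ a⟩,
      if h : σ.1 (σ.1 a) = a then
        Sum.inr ⟨σ.1 * (σ.1.cycleOf a)⁻¹, d2aux_case1_mem σ.1 (hder σ) a h σ.2.1 σ.2.2⟩
      else
        Sum.inl ⟨(σ.1 * (σ.1.cycleOf a)⁻¹) * (Equiv.swap a (σ.1 a) * σ.1.cycleOf a),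
          d2aux_case2_mem σ.1 (hder σ) a h σ.2.1 σ.2.2⟩⟩) ?_
  intro σ1 σ2 heq
  have e := congrArg (fun q : (Σ a' : {x : β // x ≠ a},
          ({σ' : Equiv.Perm β // (Multiset.card σ'.cycleType = s ∧ σ'.cycleType.sum = n - 1) ∧
              ∀ x, ¬ x ≠ a → σ' x = x}
           ⊕ {σ' : Equiv.Perm β // (Multiset.card σ'.cycleType = s - 1 ∧
                σ'.cycleType.sum = n - 2) ∧ ∀ x, ¬ (x ≠ a ∧ x ≠ a'.1) → σ' x = x})) =>
      Equiv.swap a q.1.1 * (Sum.elim Subtype.val Subtype.val q.2)) heq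
  dsimp only at e
  by_cases h1 : σ1.1 (σ1.1 a) = a <;> by_cases h2 : σ2.1 (σ2.1 a) = a <;>
    [rw [dif_pos h1, dif_pos h2] at e; rw [dif_pos h1, dif_neg h2] at e;
     rw [dif_neg h1, dif_pos h2] at e; rw [dif_neg h1, dif_neg h2] at e] <;>
    simp only [Sum.elim_inl, Sum.elim_inr] at e <;>
  · first
    | (rw [d2aux_recover1 σ1.1 (hder σ1) a h1, d2aux_recover1 σ2.1 (hder σ2) a h2] at e;
        exact Subtype.ext e)
    | (rw [d2aux_recover1 σ1.1 (hder σ1) a h1, d2aux_recover2 σ2.1 (hder σ2) a h2] at e;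
        exact Subtype.ext e)
    | (rw [d2aux_recover2 σ1.1 (hder σ1) a h1, d2aux_recover1 σ2.1 (hder σ2) a h2] at e;
        exact Subtype.ext e)
    | (rw [d2aux_recover2 σ1.1 (hder σ1) a h1, d2aux_recover2 σ2.1 (hder σ2) a h2] at e;
        exact Subtype.ext e)

lemma d2aux_main (n : ℕ) : ∀ (β : Type) [Fintype β] [DecidableEq β],
    Fintype.card β = n → ∀ s : ℕ, 1 ≤ s → 2 * s ≤ n →
    Fintype.card {σ : Equiv.Perm β // Multiset.card σ.cycleType = s ∧ σ.cycleType.sum = n}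
      ≤ (2 * (n - 1)) ^ (n - 1 - s) := by
  induction n using Nat.strongRecOn with
  | ind n IH =>
  intro β _ _ hβ s hs1 hs2
  by_cases hn4 : n < 4
  · have hs' : s = 1 := by omega
    subst hs'
    have hn2 : 2 ≤ n := by omega
    refine (d2aux_le_derangements 1 n hβ).trans ?_
    interval_cases n <;> decide
  · push_neg at hn4
    obtain ⟨a⟩ := Fintype.card_pos_iff.mp (show 0 < Fintype.card β by omega)
    have hcs : Fintype.card {x : β // x ≠ a} = n - 1 := by
      have h1 : Fintype.card {x : β // ¬ x = a}
          = Fintype.card β - Fintype.card {x : β // x = a} :=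
        Fintype.card_subtype_compl _
      rw [Fintype.card_subtype_eq] at h1
      calc Fintype.card {x : β // x ≠ a} = Fintype.card {x : β // ¬ x = a} :=
            Fintype.card_congr (Equiv.subtypeEquivRight (fun x => Iff.rfl))
        _ = n - 1 := by rw [h1, hβ]
    refine (d2aux_step n s hβ a).trans ?_
    rw [Fintype.card_sigma]
    simp only [Fintype.card_sum]
    refine le_trans (Finset.sum_le_sum
      (g := fun _ : {x : β // x ≠ a} => (2 * (n-2)) ^ (n - 2 - s) + (2 * (n-2)) ^ (n - 2 - s))
      (fun (a' : {x : β // x ≠ a}) _ => add_le_add ?_ ?_)) ?_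
    · -- T1 bound
      rw [d2aux_card_fix (fun x => x ≠ a) (fun M => Multiset.card M = s ∧ M.sum = n - 1)]
      by_cases hs2' : 2 * s ≤ n - 1
      · have h := IH (n-1) (by omega) {x : β // x ≠ a} hcs s hs1 hs2'
        have e1 : n - 1 - 1 = n - 2 := by omega
        rwa [e1] at h
      · have h0 : Fintype.card {τ : Equiv.Perm {x : β // x ≠ a} //
            Multiset.card τ.cycleType = s ∧ τ.cycleType.sum = n - 1} = 0 :=
          Fintype.card_eq_zero_iff.mpr ⟨fun τ => absurd (d2aux_two_mul_le τ.2.1 τ.2.2) hs2'⟩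
        rw [h0]; exact Nat.zero_le _
    · -- T2 bound
      rw [d2aux_card_fix (fun x => x ≠ a ∧ x ≠ a'.1)
        (fun M => Multiset.card M = s - 1 ∧ M.sum = n - 2)]
      have hpair : Fintype.card {x : β // x = a ∨ x = a'.1} = 2 := by
        rw [Fintype.card_subtype]
        rw [show Finset.filter (fun x => x = a ∨ x = a'.1) Finset.univ = {a, a'.1} by
          ext x; simp]
        exact Finset.card_pair (Ne.symm a'.2)
      have hcs2 : Fintype.card {x : β // x ≠ a ∧ x ≠ a'.1} = n - 2 := by
        calc Fintype.card {x : β // x ≠ a ∧ x ≠ a'.1}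
            = Fintype.card {x : β // ¬ (x = a ∨ x = a'.1)} :=
              Fintype.card_congr (Equiv.subtypeEquivRight (fun x => (not_or).symm))
          _ = Fintype.card β - Fintype.card {x : β // x = a ∨ x = a'.1} :=
              Fintype.card_subtype_compl _
          _ = n - 2 := by rw [hpair, hβ]
      by_cases hs1' : 2 ≤ s
      · have h := IH (n-2) (by omega) {x : β // x ≠ a ∧ x ≠ a'.1} hcs2 (s-1)
          (by omega) (by omega)
        have e2 : n - 2 - 1 - (s - 1) = n - 2 - s := by omega
        have e1 : n - 2 - 1 = n - 3 := by omega
        rw [e2, e1] at h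
        exact h.trans (Nat.pow_le_pow_left (by omega) _)
      · have h0 : Fintype.card {τ : Equiv.Perm {x : β // x ≠ a ∧ x ≠ a'.1} //
            Multiset.card τ.cycleType = s - 1 ∧ τ.cycleType.sum = n - 2} = 0 := by
          refine Fintype.card_eq_zero_iff.mpr ⟨fun τ => ?_⟩
          have hs0 : s - 1 = 0 := by omega
          have hτ1 : τ.1 = 1 := by
            have h1 := τ.2.1
            exact Equiv.Perm.card_cycleType_eq_zero.mp (by omega)
          have h2 := τ.2.2
          rw [hτ1, Equiv.Perm.cycleType_one] at h2
          simp only [Multiset.sum_zero] at h2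
          omega
        rw [h0]; exact Nat.zero_le _
    · rw [Finset.sum_const, smul_eq_mul, Finset.card_univ, hcs]
      have e3 : n - 1 - s = (n - 2 - s) + 1 := by omega
      rw [e3, pow_succ]
      calc (n-1) * ((2*(n-2))^(n-2-s) + (2*(n-2))^(n-2-s))
          = (2*(n-2))^(n-2-s) * (2*(n-1)) := by ring
        _ ≤ (2*(n-1))^(n-2-s) * (2*(n-1)) :=
            Nat.mul_le_mul_right _ (Nat.pow_le_pow_left (by omega) _)

lemma d2aux_final (m s : ℕ) (hm : 1 ≤ m) (hs : s ≤ m) :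
    Fintype.card {σ : Equiv.Perm (Fin (m+1)) //
        Multiset.card σ.cycleType = s ∧ σ.cycleType.sum = m + 1} ≤ (2 * m) ^ (m - s) := by
  rcases Nat.eq_zero_or_pos s with rfl | hs0
  · have h0 : Fintype.card {σ : Equiv.Perm (Fin (m+1)) //
        Multiset.card σ.cycleType = 0 ∧ σ.cycleType.sum = m + 1} = 0 := by
      refine Fintype.card_eq_zero_iff.mpr ⟨fun σ => ?_⟩
      have h1 : σ.1 = 1 := Equiv.Perm.card_cycleType_eq_zero.mp σ.2.1
      have h2 := σ.2.2
      rw [h1, Equiv.Perm.cycleType_one] at h2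
      simp only [Multiset.sum_zero] at h2
      omega
    rw [h0]; exact Nat.zero_le _
  · by_cases h2s : 2 * s ≤ m + 1
    · have h := d2aux_main (m+1) (Fin (m+1)) (Fintype.card_fin _) s hs0 h2s
      simpa using h
    · have h0 : Fintype.card {σ : Equiv.Perm (Fin (m+1)) //
          Multiset.card σ.cycleType = s ∧ σ.cycleType.sum = m + 1} = 0 :=
        Fintype.card_eq_zero_iff.mpr
          ⟨fun σ => absurd (d2aux_two_mul_le σ.2.1 σ.2.2) h2s⟩
      rw [h0]; exact Nat.zero_le _

end D2Aux

/-- For `m ≥ 1` and `0 ≤ s ≤ m`, the associated Stirling number of the first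
kind satisfies `d₂(m+1, s) ≤ (2m)^{m−s}`. -/
theorem d2_le (m s : ℕ) (hm : 1 ≤ m) (hs : s ≤ m) :
    d2 (m + 1) s ≤ (2 * m) ^ (m - s) := by
  unfold d2
  exact d2aux_final m s hm hs
end

section
/- Let A ∈ ℂ^{n×N} be a matrix with columns a_1,…,a_N, let Λ ⊆ {1,…,N}, and let A_Λ be the submatrix of columns indexed by Λ. Assume A_Λ* A_Λ is invertible. Let x ∈ ℂ^N be supported on Λ and set y = A x. If for every ρ ∉ Λ one has |⟨ (A_Λ* A_Λ)^{−1} A_Λ* a_ρ , R_Λ sgn(x) ⟩| < 1, where R_Λ restricts a vector to its entries in Λ, then x is the unique minimizer of ‖z‖₁ over all z ∈ ℂ^N with A z = y. -/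
open MeasureTheory Complex Matrix

/-- (Fuchs/Tropp recovery condition.) If `x` is supported on `Λ`,
`A_Λ* A_Λ` is invertible, and `|⟨A_Λ† a_ρ, R_Λ sgn(x)⟩| < 1` for all `ρ ∉ Λ`, where
`A_Λ† = (A_Λ* A_Λ)^{-1} A_Λ*`, then `x` is the unique ℓ¹ minimizer subject to `A z = A x`. -/
theorem fuchs_tropp_recovery (n N : ℕ) (A : Matrix (Fin n) (Fin N) ℂ) (Λ : Finset (Fin N))
    (x : Fin N → ℂ) (hsupp : ∀ j, x j ≠ 0 → j ∈ Λ)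
    (hinv : IsUnit ((colSub A Λ)ᴴ * colSub A Λ).det)
    (hrec : ∀ ρ : Fin N, ρ ∉ Λ →
      ‖dotc
        ((((colSub A Λ)ᴴ * colSub A Λ)⁻¹ * (colSub A Λ)ᴴ).mulVec fun i => A i ρ)
        (fun j : ↥Λ => csgn (x (j : Fin N)))‖ < 1) :
    BPrecovers A x := by
  classical
  intro z hz hne
  set AΛ : Matrix (Fin n) ↥Λ ℂ := colSub A Λ with hAΛ
  set B : Matrix ↥Λ ↥Λ ℂ := (AΛᴴ * AΛ)⁻¹ with hBdef
  set s : ↥Λ → ℂ := fun j => csgn (x (j : Fin N)) with hsdef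
  set v : Fin n → ℂ := AΛ.mulVec (B.mulVec s) with hvdef
  set w : Fin N → ℂ := Aᴴ.mulVec v with hwdef
  have hBinv : (AΛᴴ * AΛ) * B = 1 := Matrix.mul_nonsing_inv _ hinv
  have hBinv' : B * (AΛᴴ * AΛ) = 1 := Matrix.nonsing_inv_mul _ hinv
  have hBH : Bᴴ = B := by
    rw [hBdef, Matrix.conjTranspose_nonsing_inv, Matrix.conjTranspose_mul,
      Matrix.conjTranspose_conjTranspose]
  have hAv : AΛᴴ.mulVec v = s := by
    rw [hvdef, Matrix.mulVec_mulVec, Matrix.mulVec_mulVec, hBinv, Matrix.one_mulVec]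
  have hwΛ : ∀ (j : Fin N) (hj : j ∈ Λ), w j = csgn (x j) := by
    intro j hj
    have h1 : w j = (AΛᴴ.mulVec v) ⟨j, hj⟩ := by
      simp [hwdef, hAΛ, Matrix.mulVec, dotProduct, Matrix.conjTranspose_apply, colSub]
    rw [h1, hAv]
  have hstarv : star v = Matrix.vecMul (star s) (B * AΛᴴ) := by
    rw [hvdef, Matrix.star_mulVec, Matrix.star_mulVec, hBH, Matrix.vecMul_vecMul]
  have hstarw : star w = Matrix.vecMul (Matrix.vecMul (star s) (B * AΛᴴ)) A := by
    rw [hwdef, Matrix.star_mulVec, Matrix.conjTranspose_conjTranspose, hstarv]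
  have hwρ : ∀ ρ : Fin N, ρ ∉ Λ → ‖w ρ‖ < 1 := by
    intro ρ hρ
    have h2 : (starRingEnd ℂ) (w ρ) = (star w) ρ := rfl
    have h1 : (starRingEnd ℂ) (w ρ)
        = dotc ((B * AΛᴴ).mulVec fun i => A i ρ) s := by
      rw [h2, hstarw]
      simp only [dotc, Matrix.vecMul, Matrix.mulVec, dotProduct, Pi.star_apply,
        Finset.sum_mul, Finset.mul_sum, starRingEnd_apply]
      rw [Finset.sum_comm]
      exact Finset.sum_congr rfl fun j _ => Finset.sum_congr rfl fun i _ => by ring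
    calc ‖w ρ‖ = ‖(starRingEnd ℂ) (w ρ)‖ := (Complex.norm_conj _).symm
      _ < 1 := by rw [h1]; exact hrec ρ hρ
  have hwle : ∀ j : Fin N, ‖w j‖ ≤ 1 := by
    intro j
    by_cases hj : j ∈ Λ
    · rw [hwΛ j hj]
      by_cases h0 : x j = 0
      · simp [csgn, h0]
      · rw [csgn, if_neg h0]
        rw [norm_div, Complex.norm_real, norm_norm,
          div_self (norm_ne_zero_iff.mpr h0)]
    · exact le_of_lt (hwρ j hj)
  have hxw : dotc x w = ((l1norm x : ℝ) : ℂ) := by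
    rw [dotc, l1norm]
    push_cast
    refine Finset.sum_congr rfl fun j _ => ?_
    by_cases hj : j ∈ Λ
    · rw [hwΛ j hj]
      by_cases h0 : x j = 0
      · simp [csgn, h0]
      · rw [csgn, if_neg h0, map_div₀, Complex.conj_ofReal]
        have ha : ((‖x j‖ : ℝ) : ℂ) ≠ 0 := by
          exact_mod_cast norm_ne_zero_iff.mpr h0
        rw [← mul_div_assoc, Complex.mul_conj, Complex.normSq_eq_norm_sq, div_eq_iff ha]
        push_cast; ring
    · have h0 : x j = 0 := by
        by_contra h; exact hj (hsupp j h)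
      simp [h0]
  have hdot : ∀ u : Fin N → ℂ, dotc u w
      = dotProduct (Matrix.vecMul (star s) (B * AΛᴴ)) (A.mulVec u) := by
    intro u
    have h1 : dotc u w = dotProduct u (star w) := rfl
    rw [h1, hstarw, dotProduct_comm, ← Matrix.dotProduct_mulVec]
  have hzw : dotc z w = dotc x w := by rw [hdot z, hdot x, hz]
  have hle : l1norm x ≤ ∑ j, ‖z j‖ * ‖w j‖ := by
    have h1 : l1norm x = (dotc z w).re := by rw [hzw, hxw, Complex.ofReal_re]
    rw [h1]
    calc (dotc z w).re ≤ ‖dotc z w‖ := Complex.re_le_norm _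
      _ ≤ ∑ j, ‖z j * (starRingEnd ℂ) (w j)‖ := norm_sum_le _ _
      _ = ∑ j, ‖z j‖ * ‖w j‖ := by
        simp [norm_mul, Complex.norm_conj]
  by_cases hzsupp : ∀ j, z j ≠ 0 → j ∈ Λ
  · exfalso; apply hne
    have hAinj : ∀ u u' : ↥Λ → ℂ, AΛ.mulVec u = AΛ.mulVec u' → u = u' := by
      intro u u' h
      have h2 : (AΛᴴ * AΛ).mulVec u = (AΛᴴ * AΛ).mulVec u' := by
        rw [← Matrix.mulVec_mulVec, ← Matrix.mulVec_mulVec, h]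
      calc u = (B * (AΛᴴ * AΛ)).mulVec u := by rw [hBinv', Matrix.one_mulVec]
        _ = B.mulVec ((AΛᴴ * AΛ).mulVec u) := by rw [Matrix.mulVec_mulVec]
        _ = B.mulVec ((AΛᴴ * AΛ).mulVec u') := by rw [h2]
        _ = (B * (AΛᴴ * AΛ)).mulVec u' := by rw [Matrix.mulVec_mulVec]
        _ = u' := by rw [hBinv', Matrix.one_mulVec]
    have hrestr : ∀ (u : Fin N → ℂ), (∀ j, u j ≠ 0 → j ∈ Λ) →
        A.mulVec u = AΛ.mulVec (fun j : ↥Λ => u (j : Fin N)) := by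
      intro u hu
      funext i
      simp only [Matrix.mulVec, dotProduct]
      have h1 : ∑ j : ↥Λ, AΛ i j * u (j : Fin N) = ∑ j ∈ Λ, A i j * u j := by
        rw [← Finset.sum_coe_sort Λ (fun j => A i j * u j)]
        rfl
      rw [h1]
      symm
      apply Finset.sum_subset (Finset.subset_univ Λ)
      intro j _ hj
      have h0 : u j = 0 := by by_contra h; exact hj (hu j h)
      simp [h0]
    have h1 : AΛ.mulVec (fun j : ↥Λ => z (j : Fin N))
        = AΛ.mulVec (fun j : ↥Λ => x (j : Fin N)) := by
      rw [← hrestr z hzsupp, ← hrestr x hsupp, hz]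
    have h2 := hAinj _ _ h1
    funext j
    by_cases hj : j ∈ Λ
    · exact congrFun h2 ⟨j, hj⟩
    · have hxj : x j = 0 := by by_contra h; exact hj (hsupp j h)
      have hzj : z j = 0 := by by_contra h; exact hj (hzsupp j h)
      rw [hxj, hzj]
  · push_neg at hzsupp
    obtain ⟨ρ, hzρ, hρ⟩ := hzsupp
    have hstrict : ∑ j, ‖z j‖ * ‖w j‖ < l1norm z := by
      rw [l1norm]
      apply Finset.sum_lt_sum
      · intro j _
        exact mul_le_of_le_one_right (norm_nonneg _) (hwle j)
      · refine ⟨ρ, Finset.mem_univ ρ, ?_⟩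
        have h0 : 0 < ‖z ρ‖ := by simpa using hzρ
        have h1 : ‖w ρ‖ < 1 := hwρ ρ hρ
        nlinarith
    linarith
end
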